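/- If ε_R^* < 1/3, then π_R(μ_R) ≤ (1/2)·√(ε_R^*/(1 − ε_R^*)) + φ_R^*·T_R^*, where the initial distribution is the restricted ensemble ν = μ_R. -/

import Mathlib

open Finset

noncomputable section

/-- Irreducibility of a finite nonnegative matrix: any state reaches any other. -/
def Irred {n : Type*} [Fintype n] [DecidableEq n] (P : Matrix n n ℝ) : Prop :=
  ∀ x y, ∃ k : ℕ, 0 < (P ^ k) x y

/-- The restricted ensemble `μ_R(x) = μ(x)/μ(R)` (as a function on all of `X`). -/
def muR {X : Type*} [Fintype X] (μ : X → ℝ) (R : Finset X) (x : X) : ℝ :=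
  μ x / ∑ y ∈ R, μ y

/-- Escape probability `e_R(x) = Σ_{y∉R} p(x,y)`. -/
def escR {X : Type*} [Fintype X] [DecidableEq X] (p : Matrix X X ℝ) (R : Finset X)
    (x : X) : ℝ := ∑ y ∈ Rᶜ, p x y

/-- The reflected kernel `p_R` on `R`. -/
def pRefl {X : Type*} [Fintype X] [DecidableEq X] (p : Matrix X X ℝ) (R : Finset X) :
    Matrix R R ℝ :=
  fun x y => if (x : X) = (y : X) then p x x + escR p R x else p x y

/-- The sub-Markovian killed kernel `p_R^*` on `R`. -/
def pKill {X : Type*} [Fintype X] (p : Matrix X X ℝ) (R : Finset X) : Matrix R R ℝ :=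
  fun x y => p x y

/-- Mean of `f` with respect to the weight `μ` on a finite type. -/
def meanOf {n : Type*} [Fintype n] (μ : n → ℝ) (f : n → ℝ) : ℝ := ∑ x, μ x * f x

/-- Scalar product `⟨f,g⟩` with respect to the weight `μ` on a finite type. -/
def innOf {n : Type*} [Fintype n] (μ : n → ℝ) (f g : n → ℝ) : ℝ := ∑ x, μ x * f x * g x

/-- Variance of `f` with respect to the weight `μ` on a finite type. -/
def varOf {n : Type*} [Fintype n] (μ : n → ℝ) (f : n → ℝ) : ℝ :=
  ∑ x, μ x * (f x - meanOf μ f) ^ 2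

/-- Dirichlet form of the kernel `P` reversible w.r.t. `μ`. -/
def dirOf {n : Type*} [Fintype n] (P : Matrix n n ℝ) (μ : n → ℝ) (f : n → ℝ) : ℝ :=
  (1 / 2) * ∑ x, ∑ y, μ x * P x y * (f x - f y) ^ 2

/-- Spectral gap of the kernel `P` reversible w.r.t. `μ`:
`min { D(f)/Var_μ(f) : Var_μ(f) ≠ 0 }`. -/
def gapOf {n : Type*} [Fintype n] (P : Matrix n n ℝ) (μ : n → ℝ) : ℝ :=
  sInf {r : ℝ | ∃ f : n → ℝ, varOf μ f ≠ 0 ∧ r = dirOf P μ f / varOf μ f}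

/-- Spectral gap `γ_R` of the reflected process on `R`. -/
def gapR {X : Type*} [Fintype X] [DecidableEq X] (p : Matrix X X ℝ) (μ : X → ℝ)
    (R : Finset X) : ℝ :=
  gapOf (pRefl p R) (fun x : R => muR μ R x)

/-- The semigroup `exp(t(P − I))` of the continuous-time chain with jump kernel `P`. -/
def heatK {n : Type*} [Fintype n] [DecidableEq n] (P : Matrix n n ℝ) (t : ℝ) :
    Matrix n n ℝ :=
  NormedSpace.exp (t • (P - 1))

/-- `T_{δ,R}^*` as a function of `γ_R`, `ζ_R^*`, `ε_R^*` and `δ`. -/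
def Tmix (γ ζ ε δ : ℝ) : ℝ :=
  (1 / γ) * Real.log (2 / (δ * (1 - δ) * ζ)) *
    ((1 + Real.sqrt (ε / (1 - ε))) * ((1 - ε) / (1 - 3 * ε)))

/-- `ζ_R^* = min_{x∈R} μ_R(x)·h_R^*(x)²` where `h_R^* = μ_R^*/μ_R`. -/
def zetaQS {X : Type*} [Fintype X] (μ : X → ℝ) (R : Finset X) (μstar : R → ℝ) : ℝ :=
  sInf {r : ℝ | ∃ x : R, r = muR μ R x * (μstar x / muR μ R x) ^ 2}

/-- Survival probability `P_ν(τ_{X∖R} > t)` of the continuous-time chain started from `ν`. -/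
def survP {X : Type*} [Fintype X] [DecidableEq X] (p : Matrix X X ℝ) (R : Finset X)
    (ν : R → ℝ) (t : ℝ) : ℝ :=
  ∑ x : R, ∑ y : R, ν x * heatK (pKill p R) t x y

/-- `T_R^* = T_{δ,R}^*` with `δ = ε_R^*`. -/
def TstarQS {X : Type*} [Fintype X] [DecidableEq X] (p : Matrix X X ℝ) (μ : X → ℝ)
    (R : Finset X) (φstar : ℝ) (μstar : R → ℝ) : ℝ :=
  Tmix (gapR p μ R) (zetaQS μ R μstar) (φstar / gapR p μ R) (φstar / gapR p μ R)

/-- `π_R(ν) = P_ν(τ_{X∖R} ≤ T_R^*) = 1 − P_ν(τ_{X∖R} > T_R^*)`. -/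
def piQS {X : Type*} [Fintype X] [DecidableEq X] (p : Matrix X X ℝ) (μ : X → ℝ)
    (R : Finset X) (φstar : ℝ) (μstar : R → ℝ) (ν : R → ℝ) : ℝ :=
  1 - survP p R ν (TstarQS p μ R φstar μstar)


section AuxExp
open Matrix

theorem my_eigen_exp {n : Type*} [Fintype n] [DecidableEq n] (M : Matrix n n ℝ) (v : n → ℝ)
    (c : ℝ) (h : M *ᵥ v = c • v) : NormedSpace.exp M *ᵥ v = Real.exp c • v := by
  letI : SeminormedRing (Matrix n n ℝ) := Matrix.linftyOpSemiNormedRing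
  letI : NormedRing (Matrix n n ℝ) := Matrix.linftyOpNormedRing
  letI : NormedAlgebra ℝ (Matrix n n ℝ) := Matrix.linftyOpNormedAlgebra
  have hpow : ∀ k : ℕ, (M ^ k) *ᵥ v = (c ^ k) • v := by
    intro k
    induction k with
    | zero => simp
    | succ k ih =>
        rw [pow_succ, ← Matrix.mulVec_mulVec, h, Matrix.mulVec_smul, ih, smul_smul, pow_succ]
        ring_nf
  have hsum : Summable fun k : ℕ => (k.factorial : ℝ)⁻¹ • M ^ k :=
    NormedSpace.expSeries_summable' (𝕂 := ℝ) M
  let L : Matrix n n ℝ →ₗ[ℝ] (n → ℝ) :=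
    { toFun := fun A => A *ᵥ v
      map_add' := fun A B => Matrix.add_mulVec A B v
      map_smul' := fun r A => by simp [Matrix.smul_mulVec] }
  have hLcont : Continuous L := L.continuous_of_finiteDimensional
  have hmain : NormedSpace.exp M *ᵥ v = ∑' k : ℕ, ((k.factorial : ℝ)⁻¹ • M ^ k) *ᵥ v := by
    rw [NormedSpace.exp_eq_tsum (𝕂 := ℝ)]
    exact hsum.hasSum.map L hLcont |>.tsum_eq.symm
  rw [hmain]
  have : ∀ k : ℕ, ((k.factorial : ℝ)⁻¹ • M ^ k) *ᵥ v = ((k.factorial : ℝ)⁻¹ * c ^ k) • v := by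
    intro k
    rw [Matrix.smul_mulVec, hpow, smul_smul]
  simp_rw [this]
  rw [Summable.tsum_smul_const]
  · congr 1
    rw [Real.exp_eq_exp_ℝ, NormedSpace.exp_eq_tsum (𝕂 := ℝ)]
    simp [smul_eq_mul]
  · exact (NormedSpace.expSeries_summable' (𝕂 := ℝ) c).congr (by intro k; simp [smul_eq_mul])

theorem my_rev_pow {n : Type*} [Fintype n] [DecidableEq n] (M : Matrix n n ℝ) (m : n → ℝ)
    (hrev : ∀ x y, m x * M x y = m y * M y x) (k : ℕ) :
    ∀ x y, m x * (M ^ k) x y = m y * (M ^ k) y x := by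
  induction k with
  | zero => intro x y; by_cases h : x = y <;> simp [Matrix.one_apply, h, eq_comm]
  | succ k ih =>
      intro x y
      have h1 : (M ^ (k+1)) x y = ∑ z, (M ^ k) x z * M z y := by
        rw [pow_succ, Matrix.mul_apply]
      have h2 : (M ^ (k+1)) y x = ∑ z, M y z * (M ^ k) z x := by
        rw [pow_succ', Matrix.mul_apply]
      rw [h1, h2, Finset.mul_sum, Finset.mul_sum]
      apply Finset.sum_congr rfl
      intro z _
      have e1 : m x * ((M ^ k) x z * M z y) = (m x * (M ^ k) x z) * M z y := by ring
      rw [e1, ih x z]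
      have e2 : m z * (M ^ k) z x * M z y = (m z * M z y) * (M ^ k) z x := by ring
      rw [e2, hrev z y]
      ring

theorem my_rev_exp {n : Type*} [Fintype n] [DecidableEq n] (M : Matrix n n ℝ) (m : n → ℝ)
    (hrev : ∀ x y, m x * M x y = m y * M y x) :
    ∀ x y, m x * (NormedSpace.exp M) x y = m y * (NormedSpace.exp M) y x := by
  letI : SeminormedRing (Matrix n n ℝ) := Matrix.linftyOpSemiNormedRing
  letI : NormedRing (Matrix n n ℝ) := Matrix.linftyOpNormedRing
  letI : NormedAlgebra ℝ (Matrix n n ℝ) := Matrix.linftyOpNormedAlgebra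
  intro x y
  have hsum : Summable fun k : ℕ => (k.factorial : ℝ)⁻¹ • M ^ k :=
    NormedSpace.expSeries_summable' (𝕂 := ℝ) M
  let L : Matrix n n ℝ →ₗ[ℝ] ℝ :=
    { toFun := fun A => m x * A x y - m y * A y x
      map_add' := fun A B => by simp [Matrix.add_apply]; ring
      map_smul' := fun r A => by simp [Matrix.smul_apply, smul_eq_mul]; ring }
  have hLcont : Continuous L := L.continuous_of_finiteDimensional
  have : L (NormedSpace.exp M) = ∑' k : ℕ, L ((k.factorial : ℝ)⁻¹ • M ^ k) := by
    rw [NormedSpace.exp_eq_tsum (𝕂 := ℝ)]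
    exact (hsum.hasSum.map L hLcont).tsum_eq.symm
  have hz : ∀ k : ℕ, L ((k.factorial : ℝ)⁻¹ • M ^ k) = 0 := by
    intro k
    simp only [L, LinearMap.coe_mk, AddHom.coe_mk, Matrix.smul_apply, smul_eq_mul]
    linear_combination ((k.factorial : ℝ)⁻¹) * (my_rev_pow M m hrev k x y)
  have : L (NormedSpace.exp M) = 0 := by rw [this]; simp [hz]
  have := this
  simp only [L, LinearMap.coe_mk, AddHom.coe_mk] at this
  linarith

theorem my_psd_exp {n : Type*} [Fintype n] [DecidableEq n] (M : Matrix n n ℝ) (m : n → ℝ)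
    (hm : ∀ x, 0 ≤ m x) (hrev : ∀ x y, m x * M x y = m y * M y x) (w : n → ℝ) :
    0 ≤ ∑ x, ∑ y, m x * w x * (NormedSpace.exp M) x y * w y := by
  set B := NormedSpace.exp ((1/2 : ℝ) • M) with hB
  have hsplit : NormedSpace.exp M = B * B := by
    have h2 : (1/2 : ℝ) • M + (1/2 : ℝ) • M = M := by
      rw [← add_smul]; norm_num
    rw [← h2, Matrix.exp_add_of_commute _ _ (Commute.refl _)]
  have hrevB : ∀ x y, m x * B x y = m y * B y x :=
    my_rev_exp _ m (fun x y => by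
      simp only [Matrix.smul_apply, smul_eq_mul]
      linear_combination (1/2 : ℝ) * hrev x y)
  rw [hsplit]
  have key : (∑ x, ∑ y, m x * w x * (B * B) x y * w y)
      = ∑ z, m z * (∑ x, B z x * w x)^2 := by
    have lhs : ∀ x y : n, m x * w x * (B * B) x y * w y
        = ∑ z, m z * (B z x * w x) * (B z y * w y) := by
      intro x y
      rw [Matrix.mul_apply, Finset.mul_sum, Finset.sum_mul]
      refine Finset.sum_congr rfl fun z _ => ?_
      linear_combination (w x * B z y * w y) * hrevB x z
    have rhs : ∀ z : n, m z * (∑ x, B z x * w x)^2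
        = ∑ x, ∑ y, m z * (B z x * w x) * (B z y * w y) := by
      intro z
      rw [sq, Finset.sum_mul_sum, Finset.mul_sum]
      refine Finset.sum_congr rfl fun x _ => ?_
      rw [Finset.mul_sum]
      refine Finset.sum_congr rfl fun y _ => ?_
      ring
    simp_rw [lhs, rhs]
    calc (∑ x, ∑ y, ∑ z, m z * (B z x * w x) * (B z y * w y))
        = ∑ x, ∑ z, ∑ y, m z * (B z x * w x) * (B z y * w y) :=
          Finset.sum_congr rfl fun x _ => Finset.sum_comm
      _ = ∑ z, ∑ x, ∑ y, m z * (B z x * w x) * (B z y * w y) := Finset.sum_comm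
  rw [key]
  exact Finset.sum_nonneg fun z _ => mul_nonneg (hm z) (sq_nonneg _)

end AuxExp

section AuxGap
set_option linter.unusedSectionVars false
variable {n : Type*} [Fintype n] [DecidableEq n] (P : Matrix n n ℝ) (m : n → ℝ)

theorem my_var_nonneg (hm : ∀ x, 0 ≤ m x) (f : n → ℝ) : 0 ≤ varOf m f :=
  Finset.sum_nonneg fun x _ => mul_nonneg (hm x) (sq_nonneg _)

theorem my_dir_nonneg (hm : ∀ x, 0 ≤ m x) (hP : ∀ x y, 0 ≤ P x y) (f : n → ℝ) :
    0 ≤ dirOf P m f :=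
  mul_nonneg (by norm_num) <| Finset.sum_nonneg fun x _ => Finset.sum_nonneg fun y _ =>
    mul_nonneg (mul_nonneg (hm x) (hP x y)) (sq_nonneg _)

theorem my_gap_le (hm : ∀ x, 0 ≤ m x) (hP : ∀ x y, 0 ≤ P x y) (f : n → ℝ) :
    gapOf P m * varOf m f ≤ dirOf P m f := by
  rcases eq_or_ne (varOf m f) 0 with hv | hv
  · rw [hv, mul_zero]; exact my_dir_nonneg P m hm hP f
  · have hvpos : 0 < varOf m f := (my_var_nonneg m hm f).lt_of_ne (Ne.symm hv)
    have hbdd : BddBelow {r : ℝ | ∃ g : n → ℝ, varOf m g ≠ 0 ∧ r = dirOf P m g / varOf m g} := by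
      refine ⟨0, fun r hr => ?_⟩
      obtain ⟨g, hg, rfl⟩ := hr
      exact div_nonneg (my_dir_nonneg P m hm hP g) (my_var_nonneg m hm g)
    have hmem : dirOf P m f / varOf m f ∈
        {r : ℝ | ∃ g : n → ℝ, varOf m g ≠ 0 ∧ r = dirOf P m g / varOf m g} := ⟨f, hv, rfl⟩
    have := csInf_le hbdd hmem
    calc gapOf P m * varOf m f ≤ (dirOf P m f / varOf m f) * varOf m f :=
          mul_le_mul_of_nonneg_right this hvpos.le
      _ = dirOf P m f := div_mul_cancel₀ _ hv

theorem my_gap_pos [Nontrivial n] (hm : ∀ x, 0 < m x) (hm1 : ∑ x, m x = 1)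
    (hP : ∀ x y, 0 ≤ P x y) (hirr : Irred P) : 0 < gapOf P m := by
  classical
  set S0 : Set (n → ℝ) := {g | meanOf m g = 0 ∧ ∑ x, m x * g x ^ 2 = 1} with hS0
  have hPpow : ∀ k : ℕ, ∀ x y, 0 ≤ (P ^ k) x y := by
    intro k
    induction k with
    | zero => intro x y; by_cases h : x = y <;> simp [Matrix.one_apply, h]
    | succ k ih =>
        intro x y
        rw [pow_succ, Matrix.mul_apply]
        exact Finset.sum_nonneg fun z _ => mul_nonneg (ih x z) (hP z y)
  have hDpos : ∀ g ∈ S0, 0 < dirOf P m g := by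
    intro g hg
    rcases (my_dir_nonneg P m (fun x => (hm x).le) hP g).lt_or_eq with h | h
    · exact h
    exfalso
    have hterm : ∀ x y, m x * P x y * (g x - g y) ^ 2 = 0 := by
      have h2 : ∑ x, ∑ y, m x * P x y * (g x - g y) ^ 2 = 0 := by
        have := h.symm
        rw [dirOf] at this
        linarith
      intro x y
      have hxy := (Finset.sum_eq_zero_iff_of_nonneg (fun x _ => Finset.sum_nonneg fun y _ =>
        mul_nonneg (mul_nonneg (hm x).le (hP x y)) (sq_nonneg _))).mp h2 x (Finset.mem_univ x)
      exact (Finset.sum_eq_zero_iff_of_nonneg (fun y _ =>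
        mul_nonneg (mul_nonneg (hm x).le (hP x y)) (sq_nonneg _))).mp hxy y (Finset.mem_univ y)
    have hstep : ∀ x y, 0 < P x y → g x = g y := by
      intro x y hp
      have := hterm x y
      have hmx := (hm x).ne'
      have : (g x - g y) ^ 2 = 0 := by
        rcases mul_eq_zero.mp this with h' | h'
        · exact absurd h' (mul_ne_zero hmx hp.ne')
        · exact h'
      have := pow_eq_zero_iff (n := 2) (by norm_num) |>.mp this
      linarith
    have hk : ∀ k : ℕ, ∀ x y, 0 < (P ^ k) x y → g x = g y := by
      intro k
      induction k with
      | zero =>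
          intro x y hp
          by_cases h' : x = y
          · rw [h']
          · simp [Matrix.one_apply, h'] at hp
      | succ k ih =>
          intro x y hp
          rw [pow_succ', Matrix.mul_apply] at hp
          obtain ⟨z, _, hz⟩ := Finset.exists_lt_of_sum_lt (f := fun _ : n => (0:ℝ))
            (by simpa using hp)
          have h1 : 0 < P x z * (P ^ k) z y := by simpa using hz
          have hPx : 0 < P x z := by
            rcases (hP x z).lt_or_eq with h' | h'
            · exact h'
            · rw [← h', zero_mul] at h1; exact absurd h1 (lt_irrefl 0)
          have hPk : 0 < (P ^ k) z y := by
            rcases (hPpow k z y).lt_or_eq with h' | h'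
            · exact h'
            · rw [← h', mul_zero] at h1; exact absurd h1 (lt_irrefl 0)
          exact (hstep x z hPx).trans (ih z y hPk)
    have hconst : ∀ x y, g x = g y := fun x y => (hirr x y).elim fun k hk' => hk k x y hk'
    obtain ⟨x0⟩ := (inferInstance : Nonempty n)
    have hmean : meanOf m g = g x0 := by
      rw [meanOf]
      have : ∀ x ∈ Finset.univ, m x * g x = m x * g x0 := fun x _ => by rw [hconst x x0]
      rw [Finset.sum_congr rfl this, ← Finset.sum_mul, hm1, one_mul]
    have : ∑ x, m x * g x ^ 2 = 0 := by
      have hg0 : ∀ x, g x = 0 := by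
        intro x
        have := hg.1
        rw [hmean] at this
        rw [hconst x x0, this]
      simp [hg0]
    rw [hg.2] at this
    norm_num at this
  have hnorm : ∀ f : n → ℝ, varOf m f ≠ 0 →
      ∃ g ∈ S0, dirOf P m g = dirOf P m f / varOf m f := by
    intro f hVne
    have hV : 0 < varOf m f := (my_var_nonneg m (fun x => (hm x).le) f).lt_of_ne (Ne.symm hVne)
    set V := varOf m f with hVdef
    set c : ℝ := (Real.sqrt V)⁻¹ with hc
    have hc2 : c ^ 2 = V⁻¹ := by
      rw [hc, ← Real.sqrt_inv, Real.sq_sqrt (by positivity)]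
    set μf := meanOf m f with hμf
    refine ⟨fun x => c * (f x - μf), ⟨?_, ?_⟩, ?_⟩
    · show meanOf m (fun x => c * (f x - μf)) = 0
      rw [meanOf]
      have : ∀ x ∈ Finset.univ, m x * (c * (f x - μf)) = c * (m x * f x) - c * μf * m x :=
        fun x _ => by ring
      rw [Finset.sum_congr rfl this, Finset.sum_sub_distrib, ← Finset.mul_sum,
        ← Finset.mul_sum, hm1]
      have h' : (∑ i, m i * f i) = μf := rfl
      rw [h']
      ring
    · show (∑ x, m x * (c * (f x - μf)) ^ 2) = 1
      have : ∀ x ∈ Finset.univ, m x * (c * (f x - μf)) ^ 2 = c ^ 2 * (m x * (f x - μf) ^ 2) :=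
        fun x _ => by ring
      rw [Finset.sum_congr rfl this, ← Finset.mul_sum]
      have : (∑ x, m x * (f x - μf) ^ 2) = V := rfl
      rw [this, hc2, inv_mul_cancel₀ hVne]
    · show dirOf P m (fun x => c * (f x - μf)) = dirOf P m f / V
      rw [dirOf, dirOf]
      have : ∀ x y : n, m x * P x y * (c * (f x - μf) - c * (f y - μf)) ^ 2
          = c ^ 2 * (m x * P x y * (f x - f y) ^ 2) := fun x y => by ring
      simp_rw [this, ← Finset.mul_sum]
      rw [hc2]
      ring
  have hexist : ∃ f : n → ℝ, varOf m f ≠ 0 := by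
    obtain ⟨a, b, hab⟩ := exists_pair_ne n
    refine ⟨fun x => if x = a then 1 else 0, ?_⟩
    have hmean : meanOf m (fun x => if x = a then (1:ℝ) else 0) = m a := by
      rw [meanOf]
      simp [mul_ite]
    have hma1 : m a < 1 := by
      have hsub : ({a, b} : Finset n) ⊆ Finset.univ := Finset.subset_univ _
      have : m a + m b ≤ ∑ x, m x := by
        rw [← Finset.sum_pair hab]
        exact Finset.sum_le_sum_of_subset_of_nonneg hsub fun x _ _ => (hm x).le
      rw [hm1] at this
      nlinarith [hm b]
    have hge : m a * (1 - m a) ^ 2 ≤ varOf m (fun x => if x = a then (1:ℝ) else 0) := by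
      rw [varOf, hmean]
      have := Finset.single_le_sum (f := fun x => m x * ((if x = a then (1:ℝ) else 0) - m a) ^ 2)
        (fun x _ => mul_nonneg (hm x).le (sq_nonneg _)) (Finset.mem_univ a)
      simpa using this
    have : 0 < m a * (1 - m a) ^ 2 := by
      exact mul_pos (hm a) (pow_pos (by linarith) 2)
    exact ne_of_gt (lt_of_lt_of_le this hge)
  have hS0ne : S0.Nonempty := by
    obtain ⟨f, hf⟩ := hexist
    obtain ⟨g, hg, -⟩ := hnorm f hf
    exact ⟨g, hg⟩
  have hcontD : Continuous (dirOf P m) := by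
    apply Continuous.mul continuous_const
    apply continuous_finset_sum
    intro x _
    apply continuous_finset_sum
    intro y _
    exact Continuous.mul continuous_const (((continuous_apply x).sub (continuous_apply y)).pow 2)
  have hS0closed : IsClosed S0 := by
    have h1 : Continuous (meanOf m) := by
      apply continuous_finset_sum
      intro x _
      exact Continuous.mul continuous_const (continuous_apply x)
    have h2 : Continuous (fun g : n → ℝ => ∑ x, m x * g x ^ 2) := by
      apply continuous_finset_sum
      intro x _
      exact Continuous.mul continuous_const ((continuous_apply x).pow 2)
    exact (isClosed_singleton.preimage h1).inter (isClosed_singleton.preimage h2)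
  have hS0bdd : Bornology.IsBounded S0 := by
    rw [isBounded_iff_forall_norm_le]
    obtain ⟨x0⟩ := (inferInstance : Nonempty n)
    set C : ℝ := Finset.univ.sup' ⟨x0, Finset.mem_univ x0⟩ (fun x => Real.sqrt (1 / m x)) with hC
    refine ⟨C, fun g hg => ?_⟩
    have hC0 : 0 ≤ C :=
      le_trans (Real.sqrt_nonneg (1 / m x0))
        (Finset.le_sup' (fun x => Real.sqrt (1 / m x)) (Finset.mem_univ x0))
    rw [pi_norm_le_iff_of_nonneg hC0]
    intro x
    have h1 : m x * g x ^ 2 ≤ 1 := by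
      rw [← hg.2]
      exact Finset.single_le_sum (f := fun x => m x * g x ^ 2)
        (fun x _ => mul_nonneg (hm x).le (sq_nonneg _)) (Finset.mem_univ x)
    have h2 : g x ^ 2 ≤ 1 / m x := by
      rw [le_div_iff₀ (hm x)]
      linarith
    have h3 : |g x| ≤ Real.sqrt (1 / m x) := by
      rw [← Real.sqrt_sq_eq_abs]
      exact Real.sqrt_le_sqrt h2
    calc ‖g x‖ = |g x| := rfl
      _ ≤ Real.sqrt (1 / m x) := h3
      _ ≤ C := Finset.le_sup' (fun x => Real.sqrt (1 / m x)) (Finset.mem_univ x)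
  have hS0cpt : IsCompact S0 := Metric.isCompact_of_isClosed_isBounded hS0closed hS0bdd
  obtain ⟨g₀, hg₀S, hg₀min⟩ := hS0cpt.exists_isMinOn hS0ne hcontD.continuousOn
  have hg₀min : ∀ g ∈ S0, dirOf P m g₀ ≤ dirOf P m g := fun g hg => hg₀min hg
  have hc : 0 < dirOf P m g₀ := hDpos g₀ hg₀S
  have : dirOf P m g₀ ≤ gapOf P m := by
    rw [gapOf]
    apply le_csInf
    · obtain ⟨f, hf⟩ := hexist
      exact ⟨dirOf P m f / varOf m f, f, hf, rfl⟩
    · rintro b ⟨f, hf, rfl⟩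
      obtain ⟨g, hgS, hgd⟩ := hnorm f hf
      rw [← hgd]
      exact hg₀min g hgS
  linarith

end AuxGap

set_option maxHeartbeats 1000000

/-- Lemma 2.7: the escape probability before `T_R^*`, started from the restricted ensemble. -/
theorem escape_probability_restricted_ensemble
    (X : Type*) [Fintype X] [DecidableEq X]
    (p : Matrix X X ℝ) (μ : X → ℝ) (R : Finset X)
    (hp_nonneg : ∀ x y, 0 ≤ p x y)
    (hp_row : ∀ x, ∑ y, p x y = 1)
    (hp_irr : Irred p)
    (hμ_pos : ∀ x, 0 < μ x)
    (hμ_sum : ∑ x, μ x = 1)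
    (hrev : ∀ x y, μ x * p x y = μ y * p y x)
    (hR_ne : R.Nonempty) (hR_proper : R ≠ Finset.univ)
    (hR_two : 2 ≤ R.card)
    (hpR_irr : Irred (pRefl p R))
    (φstar : ℝ) (hφ_pos : 0 < φstar) (hφ_le : φstar ≤ 1)
    (μstar : R → ℝ) (hμstar_pos : ∀ x, 0 < μstar x)
    (hμstar_sum : ∑ x : R, μstar x = 1)
    (hqs : ∀ y : R, ∑ x : R, μstar x * pKill p R x y = (1 - φstar) * μstar y)
    (hε : φstar / gapR p μ R < 1 / 3) :
    piQS p μ R φstar μstar (fun x : R => muR μ R x)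
      ≤ (1 / 2) * Real.sqrt ((φstar / gapR p μ R) / (1 - φstar / gapR p μ R))
        + φstar * TstarQS p μ R φstar μstar := by
  classical
  set m : R → ℝ := fun x : R => muR μ R x with hm_def
  set γ : ℝ := gapR p μ R with hγ_def
  set T : ℝ := TstarQS p μ R φstar μstar with hT_def
  set εv : ℝ := φstar / γ with hε_def
  set ζv : ℝ := zetaQS μ R μstar with hζ_def
  -- basic facts on the restricted ensemble
  have hSR : 0 < ∑ y ∈ R, μ y := Finset.sum_pos (fun i _ => hμ_pos i) hR_ne
  have hm_pos : ∀ x : R, 0 < m x := fun x => div_pos (hμ_pos x) hSR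
  have hm1 : (∑ x : R, m x) = 1 := by
    have e1 : (∑ x : R, m x) = (∑ x : R, μ (x : X)) / (∑ y ∈ R, μ y) := by
      rw [Finset.sum_div]; rfl
    rw [e1, Finset.sum_coe_sort R μ, div_self hSR.ne']
  haveI hnontriv : Nontrivial {x // x ∈ R} := by
    have : 1 < Fintype.card {x // x ∈ R} := by rw [Fintype.card_coe]; omega
    exact Fintype.one_lt_card_iff_nontrivial.mp this
  -- reflected kernel facts
  set P : Matrix R R ℝ := pRefl p R with hP_def
  have hesc_nonneg : ∀ x : R, 0 ≤ escR p R x :=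
    fun x => Finset.sum_nonneg fun y _ => hp_nonneg _ y
  have hPsplit : ∀ x y : R, P x y = pKill p R x y + (if x = y then escR p R (x : X) else 0) := by
    intro x y
    by_cases hxy : x = y
    · subst hxy
      have e : P x x = p x x + escR p R (x : X) := if_pos rfl
      rw [e, if_pos rfl]; rfl
    · have hc : (x : X) ≠ (y : X) := fun hh => hxy (Subtype.ext hh)
      rw [if_neg hxy, add_zero]
      exact if_neg hc
  have hP_nonneg : ∀ x y : R, 0 ≤ P x y := by
    intro x y
    rw [hPsplit x y]
    have : (0:ℝ) ≤ pKill p R x y := hp_nonneg _ _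
    split_ifs with hh
    · exact add_nonneg this (hesc_nonneg x)
    · rw [add_zero]; exact this
  have hrev' : ∀ x y : R, m x * p x y = m y * p y x := by
    intro x y
    show muR μ R x * p x y = muR μ R y * p y x
    unfold muR
    rw [div_mul_eq_mul_div, div_mul_eq_mul_div, hrev]
  have hP_rev : ∀ x y : R, m x * P x y = m y * P y x := by
    intro x y
    by_cases hxy : x = y
    · rw [hxy]
    · have hc : (x : X) ≠ (y : X) := fun hh => hxy (Subtype.ext hh)
      have e1 : P x y = p x y := if_neg hc
      have e2 : P y x = p y x := if_neg (Ne.symm hc)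
      rw [e1, e2]
      exact hrev' x y
  have hProw : ∀ x : R, (∑ y : R, P x y) = 1 := by
    intro x
    rw [Finset.sum_congr rfl (fun y _ => hPsplit x y), Finset.sum_add_distrib]
    have e1 : (∑ y : R, if x = y then escR p R (x : X) else 0) = escR p R (x : X) := by
      rw [Finset.sum_ite_eq Finset.univ x (fun _ => escR p R (x : X)),
        if_pos (Finset.mem_univ x)]
    have e2 : (∑ y : R, pKill p R x y) = ∑ y ∈ R, p (x : X) y :=
      Finset.sum_coe_sort R (fun y => p (x : X) y)
    have e3 : (∑ y ∈ R, p (x : X) y) + ∑ y ∈ Rᶜ, p (x : X) y = 1 := by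
      rw [Finset.sum_add_sum_compl]; exact hp_row (x : X)
    have e4 : escR p R (x : X) = ∑ y ∈ Rᶜ, p (x : X) y := rfl
    rw [e1, e2, e4]
    linarith only [e3]
  -- spectral gap positivity
  have hγ_eq : γ = gapOf P m := hγ_def
  have hγ_pos : 0 < γ := by
    rw [hγ_eq]
    exact my_gap_pos P m hm_pos hm1 hP_nonneg hpR_irr
  have hεv_pos : 0 < εv := div_pos hφ_pos hγ_pos
  have hεv_lt : εv < 1/3 := hε
  have h3 : 0 < 1 - εv := by linarith only [hεv_lt]
  have h33 : 0 < 1 - 3*εv := by linarith only [hεv_lt]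
  -- the function h and its moments
  set q : Matrix R R ℝ := pKill p R with hq_def
  have hq_rev : ∀ x y : R, m x * q x y = m y * q y x := fun x y => hrev' x y
  set h : R → ℝ := fun x => μstar x / m x with hh_def
  have hh_pos : ∀ x, 0 < h x := fun x => div_pos (hμstar_pos x) (hm_pos x)
  have hmh : ∀ x, m x * h x = μstar x := by
    intro x
    rw [hh_def]
    exact mul_comm (m x) (μstar x / m x) ▸ div_mul_cancel₀ (μstar x) (hm_pos x).ne'
  have hmean_h : (∑ x : R, m x * h x) = 1 := by
    rw [Finset.sum_congr rfl fun x _ => hmh x]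
    exact hμstar_sum
  set Nh : ℝ := ∑ x : R, m x * h x * h x with hNh_def
  set V : ℝ := varOf m h with hV_def
  have hmeanOf : meanOf m h = 1 := hmean_h
  have hNhV : Nh = 1 + V := by
    have e1 : V = ∑ x : R, (m x * h x * h x - 2*(m x * h x) + m x) := by
      rw [hV_def, varOf, hmeanOf]
      exact Finset.sum_congr rfl fun x _ => by ring
    rw [e1, Finset.sum_add_distrib, Finset.sum_sub_distrib, ← Finset.mul_sum, hmean_h, hm1,
      ← hNh_def] at *
    linarith only [e1]
  have hV0 : 0 ≤ V := my_var_nonneg m (fun x => (hm_pos x).le) h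
  have hNh_pos : 0 < Nh := by rw [hNhV]; linarith only [hV0]
  have hNh1 : 1 ≤ Nh := by rw [hNhV]; linarith only [hV0]
  -- eigen relation q h = (1-φ) h
  have heig : ∀ x : R, (∑ y : R, q x y * h y) = (1 - φstar) * h x := by
    intro x
    have hterm : ∀ y : R, q x y * h y = (μstar y * q y x) / m x := by
      intro y
      rw [eq_div_iff (hm_pos x).ne', hh_def]
      have hy := (hm_pos y).ne'
      field_simp
      linear_combination μstar y * hq_rev x y
    rw [Finset.sum_congr rfl fun y _ => hterm y, ← Finset.sum_div, hqs x, hh_def,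
      mul_div_assoc]
  -- the generator and the heat kernel
  set A : Matrix R R ℝ := T • (q - 1) with hA_def
  have hA_entry : ∀ a b : R, A a b = T * (q a b - (1 : Matrix R R ℝ) a b) := by
    intro a b
    rw [hA_def]
    simp [Matrix.sub_apply]
  have hA_rev : ∀ x y : R, m x * A x y = m y * A y x := by
    intro x y
    rw [hA_entry, hA_entry]
    by_cases hxy : x = y
    · rw [hxy]
    · rw [Matrix.one_apply_ne hxy, Matrix.one_apply_ne (Ne.symm hxy)]
      linear_combination T * hq_rev x y
  have hA_eig : A.mulVec h = (-(φstar * T)) • h := by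
    funext x
    have e1 : (A.mulVec h) x = ∑ y : R, A x y * h y := by
      simp [Matrix.mulVec, dotProduct]
    have e2 : ∀ y : R, A x y * h y
        = T * (q x y * h y) - T * ((1 : Matrix R R ℝ) x y * h y) := by
      intro y
      rw [hA_entry]
      ring
    have e3 : (∑ y : R, (1 : Matrix R R ℝ) x y * h y) = h x := by
      simp [Matrix.one_apply, ite_mul]
    rw [e1, Finset.sum_congr rfl fun y _ => e2 y, Finset.sum_sub_distrib, ← Finset.mul_sum,
      ← Finset.mul_sum, heig x, e3]
    rw [Pi.smul_apply, smul_eq_mul]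
    ring
  set K : Matrix R R ℝ := heatK q T with hK_def
  have hKexp : K = NormedSpace.exp A := rfl
  have hKh : ∀ x, (∑ y : R, K x y * h y) = Real.exp (-(φstar * T)) * h x := by
    intro x
    have hx := congrFun (my_eigen_exp A h _ hA_eig) x
    rw [hKexp]
    simpa [Matrix.mulVec, dotProduct] using hx
  have hK_rev : ∀ x y, m x * K x y = m y * K y x := by
    intro x y
    rw [hKexp]
    exact my_rev_exp A m hA_rev x y
  set e : ℝ := Real.exp (-(φstar * T)) with he_def
  -- survival probability lower bound
  set c : ℝ := Nh⁻¹ with hc_def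
  set w : R → ℝ := fun x => 1 - c * h x with hw_def
  have hQh : ∀ f : R → ℝ, (∑ x : R, ∑ y : R, m x * f x * K x y * h y)
      = e * ∑ x : R, m x * f x * h x := by
    intro f
    rw [Finset.mul_sum]
    refine Finset.sum_congr rfl fun x _ => ?_
    have h1 : (∑ y : R, m x * f x * K x y * h y) = m x * f x * (∑ y : R, K x y * h y) := by
      rw [Finset.mul_sum]
      exact Finset.sum_congr rfl fun y _ => by ring
    rw [h1, hKh x]
    ring
  have hQsym : ∀ f g : R → ℝ, (∑ x : R, ∑ y : R, m x * f x * K x y * g y)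
      = ∑ x : R, ∑ y : R, m x * g x * K x y * f y := by
    intro f g
    have step : ∀ x y : R, m x * f x * K x y * g y = m y * g y * K y x * f x := fun x y => by
      linear_combination (f x * g y) * hK_rev x y
    simp_rw [step]
    exact Finset.sum_comm
  have hwh : (∑ x : R, m x * w x * h x) = 0 := by
    have e1 : ∀ x ∈ Finset.univ, m x * w x * h x = m x * h x - c * (m x * h x * h x) :=
      fun x _ => by rw [hw_def]; ring
    rw [Finset.sum_congr rfl e1, Finset.sum_sub_distrib, ← Finset.mul_sum, hmean_h, ← hNh_def,
      hc_def, inv_mul_cancel₀ hNh_pos.ne']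
    norm_num
  set Qww : ℝ := ∑ x : R, ∑ y : R, m x * w x * K x y * w y with hQww_def
  have hsplit_sum : (∑ x : R, ∑ y : R, m x * K x y)
      = c^2 * (∑ x : R, ∑ y : R, m x * h x * K x y * h y)
        + c * (∑ x : R, ∑ y : R, m x * h x * K x y * w y)
        + c * (∑ x : R, ∑ y : R, m x * w x * K x y * h y) + Qww := by
    have expand : ∀ x y : R, m x * K x y
        = c^2 * (m x * h x * K x y * h y) + c * (m x * h x * K x y * w y)
          + c * (m x * w x * K x y * h y) + m x * w x * K x y * w y := by
      intro x y
      have hx : c * h x + w x = 1 := by rw [hw_def]; ring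
      have hy : c * h y + w y = 1 := by rw [hw_def]; ring
      calc m x * K x y = m x * ((c*h x + w x) * (c*h y + w y)) * K x y := by rw [hx, hy]; ring
        _ = _ := by ring
    rw [hQww_def]
    calc (∑ x : R, ∑ y : R, m x * K x y)
        = ∑ x : R, ∑ y : R, (c^2 * (m x * h x * K x y * h y) + c * (m x * h x * K x y * w y)
            + c * (m x * w x * K x y * h y) + m x * w x * K x y * w y) :=
          Finset.sum_congr rfl fun x _ => Finset.sum_congr rfl fun y _ => expand x y
      _ = _ := by
          simp only [Finset.sum_add_distrib, ← Finset.mul_sum]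
  have hQhh : (∑ x : R, ∑ y : R, m x * h x * K x y * h y) = e * Nh := by
    rw [hQh h, hNh_def]
  have hQwh : (∑ x : R, ∑ y : R, m x * w x * K x y * h y) = 0 := by
    rw [hQh w, hwh, mul_zero]
  have hQhw : (∑ x : R, ∑ y : R, m x * h x * K x y * w y) = 0 := by
    rw [hQsym h w, hQwh]
  have hQww0 : 0 ≤ Qww := by
    have := my_psd_exp A m (fun x => (hm_pos x).le) hA_rev w
    rw [← hKexp] at this
    rw [hQww_def]
    exact this
  have hsurvLB : e / Nh ≤ ∑ x : R, ∑ y : R, m x * K x y := by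
    rw [hsplit_sum, hQhh, hQhw, hQwh]
    have e1 : c^2 * (e * Nh) = e / Nh := by
      rw [hc_def]
      field_simp
    rw [e1]
    simp only [mul_zero, add_zero]
    linarith only [hQww0]
  -- zeta facts
  obtain ⟨x₀, hx₀⟩ : ∃ x₀ : R, ζv = m x₀ * (μstar x₀ / m x₀)^2 := by
    have hmem : sInf (Set.range (fun x : R => muR μ R (x:X) * (μstar x / muR μ R (x:X))^2))
        ∈ Set.range (fun x : R => muR μ R (x:X) * (μstar x / muR μ R (x:X))^2) :=
      (Set.range_nonempty _).csInf_mem (Set.finite_range _)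
    obtain ⟨x₀, hx₀⟩ := hmem
    refine ⟨x₀, ?_⟩
    rw [hζ_def]
    have : zetaQS μ R μstar
        = sInf (Set.range (fun x : R => muR μ R (x:X) * (μstar x / muR μ R (x:X))^2)) := by
      rw [zetaQS]
      congr 1
      ext r
      simp [Set.range, eq_comm]
    rw [this, ← hx₀]
  have hζ_pos : 0 < ζv := by
    rw [hx₀]
    exact mul_pos (hm_pos x₀) (pow_pos (div_pos (hμstar_pos x₀) (hm_pos x₀)) 2)
  have hζ_le : ζv ≤ Nh := by
    rw [hx₀, hNh_def]
    have e1 : m x₀ * (μstar x₀ / m x₀)^2 = m x₀ * h x₀ * h x₀ := by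
      rw [hh_def]; ring
    rw [e1]
    exact Finset.single_le_sum (f := fun x => m x * h x * h x)
      (fun x _ => mul_nonneg (mul_nonneg (hm_pos x).le (hh_pos x).le) (hh_pos x).le)
      (Finset.mem_univ x₀)
  -- the Dirichlet form bound
  have hD_le : dirOf P m h ≤ φstar * Nh := by
    have hTx : (∑ x : R, ∑ y : R, m x * P x y * (h x * h x)) = Nh := by
      rw [hNh_def]
      refine Finset.sum_congr rfl fun x _ => ?_
      have e1 : ∀ y ∈ Finset.univ, m x * P x y * (h x * h x)
          = (m x * (h x * h x)) * P x y := fun y _ => by ring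
      rw [Finset.sum_congr rfl e1, ← Finset.mul_sum, hProw x]
      ring
    have hTy : (∑ x : R, ∑ y : R, m x * P x y * (h y * h y)) = Nh := by
      have e1 : ∀ x y : R, m x * P x y * (h y * h y) = (m y * P y x) * (h y * h y) :=
        fun x y => by rw [← hP_rev x y]
      calc (∑ x : R, ∑ y : R, m x * P x y * (h y * h y))
          = ∑ x : R, ∑ y : R, (m y * P y x) * (h y * h y) :=
            Finset.sum_congr rfl fun x _ => Finset.sum_congr rfl fun y _ => e1 x y
        _ = ∑ y : R, ∑ x : R, (m y * P y x) * (h y * h y) := Finset.sum_comm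
        _ = Nh := by
            rw [hNh_def]
            refine Finset.sum_congr rfl fun y _ => ?_
            have e2 : ∀ x ∈ Finset.univ, (m y * P y x) * (h y * h y)
                = (m y * (h y * h y)) * P y x := fun x _ => by ring
            rw [Finset.sum_congr rfl e2, ← Finset.mul_sum, hProw y]
            ring
    have hTxy_ge : (1 - φstar) * Nh ≤ ∑ x : R, ∑ y : R, m x * h x * P x y * h y := by
      have e1 : ∀ x y : R, m x * h x * P x y * h y
          = m x * h x * q x y * h y
            + (if x = y then m x * h x * escR p R (x:X) * h y else 0) := by
        intro x y
        rw [hPsplit x y]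
        split_ifs with hh'
        · ring
        · ring
      have e2 : (∑ x : R, ∑ y : R, m x * h x * q x y * h y) = (1 - φstar) * Nh := by
        have e3 : ∀ x : R, (∑ y : R, m x * h x * q x y * h y)
            = m x * h x * ((1 - φstar) * h x) := by
          intro x
          have e4 : ∀ y ∈ Finset.univ, m x * h x * q x y * h y
              = (m x * h x) * (q x y * h y) := fun y _ => by ring
          rw [Finset.sum_congr rfl e4, ← Finset.mul_sum, heig x]
        rw [Finset.sum_congr rfl fun x _ => e3 x, hNh_def, Finset.mul_sum]
        exact Finset.sum_congr rfl fun x _ => by ring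
      calc (1 - φstar) * Nh = ∑ x : R, ∑ y : R, m x * h x * q x y * h y := e2.symm
        _ ≤ ∑ x : R, ∑ y : R, m x * h x * P x y * h y := by
            refine Finset.sum_le_sum fun x _ => Finset.sum_le_sum fun y _ => ?_
            rw [e1 x y]
            have : (0:ℝ) ≤ if x = y then m x * h x * escR p R (x:X) * h y else 0 := by
              split_ifs with hh'
              · exact mul_nonneg (mul_nonneg (mul_nonneg (hm_pos x).le (hh_pos x).le)
                  (hesc_nonneg x)) (hh_pos y).le
              · exact le_refl 0
            linarith only [this]
    have hDid : dirOf P m h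
        = Nh - ∑ x : R, ∑ y : R, m x * h x * P x y * h y := by
      rw [dirOf]
      have e1 : ∀ x y : R, m x * P x y * (h x - h y)^2
          = m x * P x y * (h x * h x) - 2 * (m x * h x * P x y * h y)
            + m x * P x y * (h y * h y) := fun x y => by ring
      simp_rw [e1, Finset.sum_add_distrib, Finset.sum_sub_distrib, ← Finset.mul_sum]
      rw [hTx, hTy]
      ring
    rw [hDid]
    linarith only [hTxy_ge]
  -- variance bound
  have hγV : γ * V ≤ φstar * Nh := by
    have := my_gap_le P m (fun x => (hm_pos x).le) hP_nonneg h
    rw [← hγ_eq, ← hV_def] at this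
    linarith only [this, hD_le]
  have hVe : V ≤ εv / (1 - εv) := by
    have h2 : V ≤ εv * (1 + V) := by
      have h2a : V ≤ φstar * (1 + V) / γ := by
        rw [le_div_iff₀ hγ_pos, mul_comm]
        rw [hNhV] at hγV
        exact hγV
      have h2b : εv * (1 + V) = φstar * (1 + V) / γ := by
        rw [hε_def, div_mul_eq_mul_div]
      rw [h2b]
      exact h2a
    rw [le_div_iff₀ h3]
    calc V * (1-εv) = V - εv*V := by ring
      _ ≤ (εv*(1+V)) - εv*V := sub_le_sub_right h2 _
      _ = εv := by ring
  have hVscaled : V * (1 - εv) ≤ εv := (le_div_iff₀ h3).mp hVe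
  -- T is nonnegative
  have hT_eq : T = (1/γ) * Real.log (2/(εv*(1-εv)*ζv))
      * ((1 + Real.sqrt (εv/(1-εv))) * ((1-εv)/(1-3*εv))) := by
    rw [hT_def]
    rfl
  have hT0 : 0 ≤ T := by
    rw [hT_eq]
    have hden_pos : 0 < εv*(1-εv)*ζv := mul_pos (mul_pos hεv_pos h3) hζ_pos
    have hden_le : εv*(1-εv)*ζv ≤ 1 := by
      have k1 : εv*(1-εv)*ζv ≤ εv*(1-εv)*Nh :=
        mul_le_mul_of_nonneg_left hζ_le (by positivity)
      have k2 : εv*(1-εv)*Nh ≤ εv := by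
        rw [hNhV]
        have t1 : (1-εv)*(1+V) ≤ 1 := by
          calc (1-εv)*(1+V) = (1-εv) + V*(1-εv) := by ring
            _ ≤ (1-εv) + εv := by linarith only [hVscaled]
            _ = 1 := by ring
        calc εv*(1-εv)*(1+V) = εv*((1-εv)*(1+V)) := by ring
          _ ≤ εv*1 := mul_le_mul_of_nonneg_left t1 hεv_pos.le
          _ = εv := mul_one εv
      linarith only [k1, k2, hεv_lt]
    have hlog : 0 ≤ Real.log (2/(εv*(1-εv)*ζv)) := by
      apply Real.log_nonneg
      rw [le_div_iff₀ hden_pos]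
      linarith only [hden_le]
    apply mul_nonneg (mul_nonneg (by positivity) hlog)
    exact mul_nonneg (by positivity) (div_nonneg h3.le h33.le)
  -- final assembly
  set s : ℝ := Real.sqrt (εv/(1-εv)) with hs_def
  have hs0 : 0 ≤ s := Real.sqrt_nonneg _
  have hs2 : s^2 = εv/(1-εv) := Real.sq_sqrt (by positivity)
  have hVs2 : V ≤ s^2 := by rw [hs2]; exact hVe
  have hs21 : s^2 ≤ 1 := by
    rw [hs2, div_le_one h3]
    linarith only [hεv_lt]
  have hs1 : s ≤ 1 := by
    rw [hs_def]
    have hle : εv/(1-εv) ≤ 1 := by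
      rw [div_le_one h3]
      linarith only [hεv_lt]
    calc Real.sqrt (εv/(1-εv)) ≤ Real.sqrt 1 := Real.sqrt_le_sqrt hle
      _ = 1 := Real.sqrt_one
  have hfrac : (Nh - 1)/Nh ≤ s/2 := by
    rw [hNhV]
    have h1V : 0 < 1+V := by linarith only [hV0]
    rw [div_le_div_iff₀ h1V (by norm_num : (0:ℝ) < 2)]
    have t1 : 0 ≤ s*(1-s)^2 := mul_nonneg hs0 (sq_nonneg _)
    have t3 : 0 ≤ s^2 - V := by linarith only [hVs2]
    have t2 : 0 ≤ (1-s)*(s^2-V) := mul_nonneg (by linarith only [hs1]) t3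
    linarith only [t1, t2, t3]
  have he1 : e ≤ 1 := by
    rw [he_def]
    calc Real.exp (-(φstar * T)) ≤ Real.exp 0 := by
          apply Real.exp_le_exp.mpr
          exact neg_nonpos.mpr (mul_nonneg hφ_pos.le hT0)
      _ = 1 := Real.exp_zero
  have he2 : 1 - e ≤ φstar * T := by
    have := Real.add_one_le_exp (-(φstar*T))
    rw [← he_def] at this
    linarith only [this]
  have hgoal_eq : piQS p μ R φstar μstar m = 1 - ∑ x : R, ∑ y : R, m x * K x y := by
    unfold piQS survP
    rw [← hT_def, ← hq_def, ← hK_def]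
  have hfrac0 : 0 ≤ (Nh - 1)/Nh := div_nonneg (by linarith only [hNh1]) hNh_pos.le
  calc piQS p μ R φstar μstar m = 1 - ∑ x : R, ∑ y : R, m x * K x y := hgoal_eq
    _ ≤ 1 - e/Nh := by linarith only [hsurvLB]
    _ = (1-e) + e*((Nh-1)/Nh) := by
        field_simp
        ring
    _ ≤ φstar*T + 1*((Nh-1)/Nh) :=
        add_le_add he2 (mul_le_mul_of_nonneg_right he1 hfrac0)
    _ ≤ φstar*T + s/2 := by rw [one_mul]; linarith only [hfrac]
    _ = 1/2 * s + φstar*T := by ring
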